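/- arXiv:1610.09821 — 3 statements merged into one kernel-verified Lean document; each statement's English description precedes it below -/
import Mathlib

section
/- Let K be an algebraically closed field of characteristic p > 0, q = p^h with h ≥ 1, and let α₁, α₂, β₁, β₂ ∈ K with α₁β₂ − α₂β₁ ≠ 0. Then for every (c, c') ∈ K², the system of equations z₁^q + α₁z₁ + α₂z₂ = c, z₂^q + β₁z₁ + β₂z₂ = c' has exactly q² solutions (z₁, z₂) ∈ K². -/
open Polynomial

lemma count_core {K : Type*} [Field K] [IsAlgClosed K] (f : K[X]) (u : K) (hu : u ≠ 0)
    (hd : f.derivative = C u) (hdeg : 0 < f.natDegree) :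
    {x : K | f.eval x = 0}.ncard = f.natDegree := by
  classical
  have hf0 : f ≠ 0 := fun h => by simp [h] at hdeg
  have hsep : f.Separable := by
    refine ⟨0, C u⁻¹, ?_⟩
    rw [hd, zero_mul, zero_add, ← C_mul, inv_mul_cancel₀ hu, C_1]
  have hroots : f.roots.Nodup := Polynomial.nodup_roots hsep
  have hcard : f.roots.card = f.natDegree :=
    Polynomial.splits_iff_card_roots.mp (IsAlgClosed.splits f)
  have hset : {x : K | f.eval x = 0} = ↑f.roots.toFinset := by
    ext x
    simp [Polynomial.mem_roots hf0, Polynomial.IsRoot]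
  rw [hset, Set.ncard_coe_finset, Multiset.toFinset_card_of_nodup hroots, hcard]

lemma count_single (p m : ℕ) (hp : p.Prime) (hm : 1 ≤ m) (K : Type*) [Field K] [CharP K p]
    [IsAlgClosed K] (u d : K) (hu : u ≠ 0) :
    {x : K | x ^ p ^ m + u * x = d}.ncard = p ^ m := by
  have hpm : 1 < p ^ m := Nat.one_lt_pow (by omega) hp.one_lt
  set f : K[X] := X ^ p ^ m + C u * X - C d with hf
  have hd : f.derivative = C u := by
    have : ((p ^ m : ℕ) : K) = 0 := by
      rw [Nat.cast_pow, CharP.cast_eq_zero K p, zero_pow (by omega)]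
    simp [hf, this, derivative_X_pow]
  have hdeg : f.natDegree = p ^ m := by
    unfold f
    compute_degree!
    · have h1 : p ^ m ≠ 1 := by omega
      have h2 : ¬(p = 0 ∧ ¬m = 0) := by simp [hp.ne_zero]
      simp [h1, h2, hp.ne_one, hp.ne_zero, show m ≠ 0 by omega]
    · omega
    · omega
  have hsetf : {x : K | x ^ p ^ m + u * x = d} = {x : K | f.eval x = 0} := by
    ext x; simp [hf, sub_eq_zero]
  rw [hsetf, count_core f u hu hd (by omega), hdeg]

lemma count_double (p k m : ℕ) (hp : p.Prime) (hk : 1 ≤ k) (hkm : k < m) (K : Type*)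
    [Field K] [CharP K p] [IsAlgClosed K] (A u d : K) (hu : u ≠ 0) :
    {x : K | x ^ p ^ m + A * x ^ p ^ k + u * x = d}.ncard = p ^ m := by
  have hpk : 1 < p ^ k := Nat.one_lt_pow (by omega) hp.one_lt
  have hlt : p ^ k < p ^ m := Nat.pow_lt_pow_right hp.one_lt hkm
  set f : K[X] := X ^ p ^ m + C A * X ^ p ^ k + C u * X - C d with hf
  have hd : f.derivative = C u := by
    have h1 : ((p ^ m : ℕ) : K) = 0 := by
      rw [Nat.cast_pow, CharP.cast_eq_zero K p, zero_pow (by omega)]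
    have h2 : ((p ^ k : ℕ) : K) = 0 := by
      rw [Nat.cast_pow, CharP.cast_eq_zero K p, zero_pow (by omega)]
    simp [hf, h1, h2, derivative_X_pow]
  have hdeg : f.natDegree = p ^ m := by
    unfold f
    compute_degree!
    · have h1 : p ^ m ≠ 1 := by omega
      have h2 : ¬(p = 0 ∧ ¬m = 0) := by simp [hp.ne_zero]
      have h3 : p ^ m ≠ p ^ k := by omega
      simp [h1, h2, h3, hp.ne_one, hp.ne_zero, show m ≠ 0 by omega]
    · omega
    · omega
    · omega
  have hsetf : {x : K | x ^ p ^ m + A * x ^ p ^ k + u * x = d} = {x : K | f.eval x = 0} := by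
    ext x; simp [hf, sub_eq_zero]
  rw [hsetf, count_core f u hu hd (by omega), hdeg]

lemma ncard_prod' {A B : Type*} (s : Set A) (t : Set B) :
    (s ×ˢ t).ncard = s.ncard * t.ncard := by
  rw [← Nat.card_coe_set_eq, ← Nat.card_coe_set_eq, ← Nat.card_coe_set_eq,
    Nat.card_congr (Equiv.Set.prod s t), Nat.card_prod]

lemma elim_case (p h : ℕ) (hp : p.Prime) (hh : 1 ≤ h)
    (K : Type*) [Field K] [CharP K p] [IsAlgClosed K]
    (α₁ α₂ β₁ β₂ : K) (hα₂ : α₂ ≠ 0) (hdet : α₁ * β₂ - α₂ * β₁ ≠ 0) (c c' : K) :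
    {z : K × K | z.1 ^ (p ^ h) + α₁ * z.1 + α₂ * z.2 = c ∧
        z.2 ^ (p ^ h) + β₁ * z.1 + β₂ * z.2 = c'}.ncard = (p ^ h) ^ 2 := by
  set q := p ^ h with hq
  set g : K → K := fun x => (c - x ^ q - α₁ * x) / α₂ with hgdef
  have hg : ∀ x : K, α₂ * g x = c - x ^ q - α₁ * x := fun x => by
    rw [hgdef]; field_simp
  set e := α₂ ^ (q - 1) with hedef
  have hq1 : 1 ≤ q := Nat.one_le_iff_ne_zero.mpr (pow_ne_zero h hp.ne_zero)
  have he : α₂ ^ q = e * α₂ := by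
    rw [hedef, ← pow_succ]; congr 1; omega
  have hα₂q : α₂ ^ q ≠ 0 := pow_ne_zero _ hα₂
  have hu : e * (α₁ * β₂ - α₂ * β₁) ≠ 0 := mul_ne_zero (pow_ne_zero _ hα₂) hdet
  have : Fact (Nat.Prime p) := ⟨hp⟩
  -- Frobenius expansion
  have hfr : ∀ x : K, (c - x ^ q - α₁ * x) ^ q = c ^ q - x ^ p ^ (h + h) - α₁ ^ q * x ^ q := by
    intro x
    rw [sub_pow_char_pow, sub_pow_char_pow, mul_pow, ← pow_mul, ← pow_add]
  have key : ∀ x : K, (g x ^ q + β₁ * x + β₂ * g x = c') ↔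
      (x ^ p ^ (h + h) + (α₁ ^ q + e * β₂) * x ^ q + (e * (α₁ * β₂ - α₂ * β₁)) * x
        = c ^ q + e * β₂ * c - α₂ ^ q * c') := by
    intro x
    rw [← mul_right_inj' hα₂q]
    have hpow : α₂ ^ q * g x ^ q = (c - x ^ q - α₁ * x) ^ q := by
      rw [← mul_pow, hg x]
    constructor
    · intro H
      linear_combination (-1 : K) * H + hpow + hfr x + e * β₂ * hg x +
        (β₁ * x + β₂ * g x) * he
    · intro H
      linear_combination (-1 : K) * H + hpow + hfr x + e * β₂ * hg x +
        (β₁ * x + β₂ * g x) * he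
  have heq1 : ∀ z : K × K, (z.1 ^ q + α₁ * z.1 + α₂ * z.2 = c) ↔ z.2 = g z.1 := by
    intro z
    constructor
    · intro H
      rw [hgdef]
      rw [eq_div_iff hα₂]
      linear_combination H
    · intro H
      rw [H]
      linear_combination hg z.1
  have himg : {z : K × K | z.1 ^ (p ^ h) + α₁ * z.1 + α₂ * z.2 = c ∧
        z.2 ^ (p ^ h) + β₁ * z.1 + β₂ * z.2 = c'} =
      (fun x => (x, g x)) '' {x : K | x ^ p ^ (h + h) + (α₁ ^ q + e * β₂) * x ^ (p ^ h)
        + (e * (α₁ * β₂ - α₂ * β₁)) * x = c ^ q + e * β₂ * c - α₂ ^ q * c'} := by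
    ext z
    simp only [Set.mem_image, Set.mem_setOf_eq]
    constructor
    · rintro ⟨h1, h2⟩
      have h3 : z.2 = g z.1 := (heq1 z).mp h1
      rw [h3] at h2
      exact ⟨z.1, (key z.1).mp h2, Prod.ext rfl h3.symm⟩
    · rintro ⟨x, hx, rfl⟩
      exact ⟨(heq1 (x, g x)).mpr rfl, (key x).mpr hx⟩
  have hinj : Function.Injective (fun x : K => (x, g x)) := fun a b hab =>
    congrArg Prod.fst hab
  rw [himg, Set.ncard_image_of_injective _ hinj,
    count_double p h (h + h) hp hh (by omega) K _ _ _ hu]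
  rw [sq, ← pow_add]

theorem stmt_2' (p h : ℕ) (hp : p.Prime) (hh : 1 ≤ h)
    (K : Type*) [Field K] [CharP K p] [IsAlgClosed K]
    (α₁ α₂ β₁ β₂ : K) (hdet : α₁ * β₂ - α₂ * β₁ ≠ 0) (c c' : K) :
    {z : K × K | z.1 ^ (p ^ h) + α₁ * z.1 + α₂ * z.2 = c ∧
        z.2 ^ (p ^ h) + β₁ * z.1 + β₂ * z.2 = c'}.ncard = (p ^ h) ^ 2 := by
  by_cases hα₂ : α₂ ≠ 0
  · exact elim_case p h hp hh K α₁ α₂ β₁ β₂ hα₂ hdet c c'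
  push_neg at hα₂
  by_cases hβ₁ : β₁ ≠ 0
  · have hdet' : β₂ * α₁ - β₁ * α₂ ≠ 0 := fun H => hdet (by linear_combination H)
    have h2 := elim_case p h hp hh K β₂ β₁ α₂ α₁ hβ₁ hdet' c' c
    have himg : {z : K × K | z.1 ^ (p ^ h) + α₁ * z.1 + α₂ * z.2 = c ∧
          z.2 ^ (p ^ h) + β₁ * z.1 + β₂ * z.2 = c'} =
        Prod.swap '' {z : K × K | z.1 ^ (p ^ h) + β₂ * z.1 + β₁ * z.2 = c' ∧
          z.2 ^ (p ^ h) + α₂ * z.1 + α₁ * z.2 = c} := by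
      ext z
      simp only [Set.mem_image, Set.mem_setOf_eq, Prod.exists, Prod.swap_prod_mk]
      constructor
      · rintro ⟨e1, e2⟩
        exact ⟨z.2, z.1, ⟨by linear_combination e2, by linear_combination e1⟩,
          Prod.ext rfl rfl⟩
      · rintro ⟨a, b, ⟨e1, e2⟩, rfl⟩
        exact ⟨by linear_combination e2, by linear_combination e1⟩
    rw [himg, Set.ncard_image_of_injective _ Prod.swap_injective, h2]
  · push_neg at hβ₁
    have hαβ : α₁ * β₂ ≠ 0 := by
      intro H; exact hdet (by rw [hα₂]; linear_combination H)
    have hα₁ : α₁ ≠ 0 := fun H => hαβ (by rw [H, zero_mul])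
    have hβ₂ : β₂ ≠ 0 := fun H => hαβ (by rw [H, mul_zero])
    have hset : {z : K × K | z.1 ^ (p ^ h) + α₁ * z.1 + α₂ * z.2 = c ∧
          z.2 ^ (p ^ h) + β₁ * z.1 + β₂ * z.2 = c'} =
        {x : K | x ^ (p ^ h) + α₁ * x = c} ×ˢ {y : K | y ^ (p ^ h) + β₂ * y = c'} := by
      ext z
      simp [Set.mem_prod, hα₂, hβ₁]
    rw [hset, ncard_prod', count_single p h hp hh K α₁ c hα₁,
      count_single p h hp hh K β₂ c' hβ₂, sq]


/-- Over an algebraically closed field `K` of characteristic `p`, with `q = p^h` and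
`α₁β₂ − α₂β₁ ≠ 0`, the system `z₁^q + α₁z₁ + α₂z₂ = c`, `z₂^q + β₁z₁ + β₂z₂ = c'`
has exactly `q²` solutions in `K × K`. -/
theorem stmt_2 (p h : ℕ) (hp : p.Prime) (hh : 1 ≤ h)
    (K : Type*) [Field K] [CharP K p] [IsAlgClosed K]
    (α₁ α₂ β₁ β₂ : K) (hdet : α₁ * β₂ - α₂ * β₁ ≠ 0) (c c' : K) :
    {z : K × K | z.1 ^ (p ^ h) + α₁ * z.1 + α₂ * z.2 = c ∧
        z.2 ^ (p ^ h) + β₁ * z.1 + β₂ * z.2 = c'}.ncard = (p ^ h) ^ 2 := by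
  exact stmt_2' p h hp hh K α₁ α₂ β₁ β₂ hdet c c'
end

section
/- Let K be a field of characteristic zero and let w ∈ K[[X]] be a formal power series with w(0) = 1 satisfying w(X)^p = w(pX) (i.e. the substitution of pX into w equals the p-th power of w). Then w′(X) = w′(0)·w(X) as formal power series, and consequently w(X) = exp(a·X) where a = w′(0). -/
open PowerSeries

/-- Let `K` be a field of characteristic zero and `w ∈ K[[X]]` with `w(0) = 1` and
`w(X)^p = w(pX)`. Then `w′ = w′(0)·w`, and `w = exp(aX)` with `a = w′(0)` (here
`exp(aX)` is the rescaling by `a` of the formal exponential series). -/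
theorem stmt_6 (p : ℕ) (hp : p.Prime) (K : Type*) [Field K] [CharZero K]
    (w : PowerSeries K) (h0 : PowerSeries.constantCoeff w = 1)
    (hw : w ^ p = PowerSeries.rescale (p : K) w) :
    w.derivativeFun = PowerSeries.C (PowerSeries.coeff 1 w) * w ∧
    w = PowerSeries.rescale (PowerSeries.coeff 1 w) (PowerSeries.exp K) := by
  set a := coeff 1 w with ha
  set v := rescale a (exp K) with hv
  have hv0 : constantCoeff v = 1 := by
    rw [hv, ← coeff_zero_eq_constantCoeff_apply, coeff_rescale]
    simp [coeff_exp]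
  have hvcoeff : ∀ n : ℕ, coeff n v = a ^ n * algebraMap ℚ K (1 / n.factorial) := by
    intro n
    rw [hv, coeff_rescale, coeff_exp]
  have hvw : v ^ p = rescale (p : K) v := by
    rw [hv, ← map_pow, exp_pow_eq_rescale_exp, rescale_rescale, rescale_rescale, mul_comm]
  have key : ∀ n, coeff n w = coeff n v := by
    intro n
    induction n using Nat.strong_induction_on with
    | _ n ih =>
      match n with
      | 0 => rw [coeff_zero_eq_constantCoeff_apply, coeff_zero_eq_constantCoeff_apply, h0, hv0]
      | 1 =>
        rw [hvcoeff 1, ← ha]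
        simp
      | (m + 2) =>
        set n := m + 2 with hn
        have e1 : (p : K) ^ n * (coeff n w - coeff n v)
            = (p : K) * (coeff n w - coeff n v) := by
          have h2 : w ^ p - v ^ p = (∑ i ∈ Finset.range p, w ^ i * v ^ (p - 1 - i)) * (w - v) :=
            (geom_sum₂_mul w v p).symm
          have h3 := congrArg (coeff n) h2
          rw [hw, hvw, ← map_sub, coeff_rescale, map_sub] at h3
          rw [h3, coeff_mul, Finset.sum_eq_single ((0 : ℕ), n)]
          · rw [coeff_zero_eq_constantCoeff_apply, map_sum, map_sub]
            have : ∀ i ∈ Finset.range p,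
                constantCoeff (w ^ i * v ^ (p - 1 - i)) = 1 := by
              intro i _
              rw [map_mul, map_pow, map_pow, h0, hv0, one_pow, one_pow, one_mul]
            rw [Finset.sum_congr rfl this, Finset.sum_const, Finset.card_range, nsmul_eq_mul,
              mul_one]
          · intro b hb hbne
            have hb2 : b.2 < n := by
              rcases b with ⟨b1, b2⟩
              replace hb : b1 + b2 = n := by simpa [Finset.mem_antidiagonal] using hb
              rcases Nat.eq_zero_or_pos b1 with h | h
              · exact absurd (by simp [h, ← hb, Prod.ext_iff]) hbne
              · omega
            rw [map_sub, ih b.2 hb2, sub_self, mul_zero]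
          · intro h
            exact absurd (by simp [Finset.mem_antidiagonal]) h
        have hd : ((p : K) ^ n - (p : K)) * (coeff n w - coeff n v) = 0 := by
          rw [sub_mul, e1, sub_self]
        have hne : (p : K) ^ n - (p : K) ≠ 0 := by
          intro h
          have h' : ((p : K)) ^ n = (p : K) := sub_eq_zero.mp h
          have hpn : p ^ n = p := by exact_mod_cast h'
          have h1 : p ^ 1 < p ^ n := Nat.pow_lt_pow_right hp.one_lt (by omega)
          simp [hpn] at h1
        exact sub_eq_zero.mp ((mul_eq_zero.mp hd).resolve_left hne)
  have hwv : w = v := PowerSeries.ext key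
  constructor
  · ext n
    change coeff n (derivative K w) = coeff n (C a * w)
    rw [coeff_derivative, coeff_C_mul, hwv, hvcoeff (n + 1), hvcoeff n]
    have hfac : (algebraMap ℚ K (1 / (n + 1).factorial)) * ((n : K) + 1)
        = algebraMap ℚ K (1 / n.factorial) := by
      have : ((n : K) + 1) = algebraMap ℚ K ((n : ℚ) + 1) := by push_cast; ring
      rw [this, ← map_mul]
      congr 1
      rw [Nat.factorial_succ]
      push_cast
      field_simp
    rw [mul_assoc, hfac, pow_succ]
    ring
  · exact hwv
end

section
/- Let B be a perfect 𝔽_p-algebra and A a ring that is p-adically separated and complete, with A/pA given. Then there is a natural bijection between ring homomorphisms W(B) → A (from the Witt vectors of B) and ring homomorphisms B → A^♭, where A^♭ = lim_{x↦x^p} A/pA. Concretely, to f : B → A^♭ one associates g : W(B) → A with g((x_n)_{n≥0}) = Σ_{n≥0} p^n · θ_A(f_n(x_n)), where f_n = lim of p^n-th roots and θ_A is the projection to the 0-th component lifted to A. -/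
open Function

namespace UWV16

variable (p : ℕ) [Fact p.Prime]

section WittSide

variable {B : Type*} [CommRing B] [CharP B p] [PerfectRing B p]

theorem exists_pmul (x : WittVector p B) (hx : x.coeff 0 = 0) :
    ∃ y : WittVector p B, x = p * y := by
  refine ⟨(WittVector.frobeniusEquiv p B).symm (WittVector.mk p fun n => x.coeff (n + 1)), ?_⟩
  have h1 : x = WittVector.verschiebung (WittVector.mk p fun n => x.coeff (n + 1)) := by
    apply WittVector.ext
    intro n
    cases n with
    | zero => rw [WittVector.verschiebung_coeff_zero, hx]
    | succ n => rw [WittVector.verschiebung_coeff_succ, WittVector.coeff_mk]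
  conv_lhs => rw [h1, ← (WittVector.frobeniusEquiv p B).apply_symm_apply
      (WittVector.mk p fun n => x.coeff (n + 1))]
  rw [WittVector.frobeniusEquiv_apply, WittVector.verschiebung_frobenius, mul_comm]

theorem iterate_frobeniusEquiv_symm_pow (b : B) (n : ℕ) :
    ((frobeniusEquiv B p).symm)^[n] b ^ p ^ n = b := by
  induction n generalizing b with
  | zero => simp
  | succ n ih =>
    rw [Function.iterate_succ_apply, pow_succ, pow_mul, ih ((frobeniusEquiv B p).symm b),
      frobeniusEquiv_symm_pow_p]

end WittSide


variable (p : ℕ) [Fact p.Prime]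

section ASide

variable (A : Type*) [CommRing A]

local notation "𝕀" => Ideal.span {(p : A)}

theorem p_pow_zero (n : ℕ) : (p : A ⧸ (𝕀 ^ (n + 1))) ^ (n + 1) = 0 := by
  have : ((p : A) ^ (n + 1) : A) ∈ 𝕀 ^ (n + 1) := by
    rw [Ideal.span_singleton_pow]
    exact Ideal.mem_span_singleton_self _
  rw [show (p : A ⧸ (𝕀 ^ (n + 1))) = Ideal.Quotient.mk (𝕀 ^ (n + 1)) ((p : A)) by rfl,
    ← map_pow, Ideal.Quotient.eq_zero_iff_mem]
  exact this

/-- the reduction `A/p^{n+1} → A/p`. -/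
noncomputable def rho (n : ℕ) : (A ⧸ (𝕀 ^ (n + 1))) →+* A ⧸ 𝕀 :=
  Ideal.Quotient.factor (Ideal.pow_le_self (Nat.succ_ne_zero n))

theorem rho_surjective (n : ℕ) : Function.Surjective (rho p A n) := by
  intro q
  obtain ⟨a, rfl⟩ := Ideal.Quotient.mk_surjective q
  exact ⟨Ideal.Quotient.mk _ a, Ideal.Quotient.factor_mk _ _⟩

set_option maxHeartbeats 1000000 in
theorem ghost_ker (n : ℕ) (y : WittVector p (A ⧸ (𝕀 ^ (n + 1))))
    (hy : ∀ i, ∃ t, y.coeff i = (p : A ⧸ (𝕀 ^ (n + 1))) * t) :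
    WittVector.ghostComponent n y = 0 := by
  rw [WittVector.ghostComponent_apply, aeval_wittPolynomial]
  refine Finset.sum_eq_zero fun i hi => ?_
  obtain ⟨t, ht⟩ := hy i
  have hin : i ≤ n := Nat.lt_succ_iff.mp (Finset.mem_range.mp hi)
  have h1 : n + 1 ≤ i + p ^ (n - i) := by
    have h2 : n - i < p ^ (n - i) := Nat.lt_pow_self (Fact.out (p := p.Prime)).one_lt
    omega
  obtain ⟨k, hk⟩ := Nat.exists_eq_add_of_le h1
  rw [ht, mul_pow, ← mul_assoc, ← pow_add, hk]
  have hz : (p : A ⧸ (𝕀 ^ (n + 1))) ^ (n + 1 + k) = 0 := by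
    rw [pow_add (p : A ⧸ (𝕀 ^ (n + 1))) (n + 1) k, p_pow_zero p A n, zero_mul]
  rw [hz, zero_mul]

theorem map_rho_ker (n : ℕ) (y : WittVector p (A ⧸ (𝕀 ^ (n + 1))))
    (hy : WittVector.map (rho p A n) y = 0) : WittVector.ghostComponent n y = 0 := by
  refine ghost_ker p A n y fun i => ?_
  have h1 : rho p A n (y.coeff i) = 0 := by
    have := congrArg (fun z => WittVector.coeff z i) hy
    simpa [WittVector.map_coeff] using this
  obtain ⟨a, ha⟩ := Ideal.Quotient.mk_surjective (I := 𝕀 ^ (n + 1)) (y.coeff i)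
  rw [← ha, rho, Ideal.Quotient.factor_mk, Ideal.Quotient.eq_zero_iff_mem,
    Ideal.mem_span_singleton] at h1
  obtain ⟨t, ht⟩ := h1
  exact ⟨Ideal.Quotient.mk _ t, by rw [← ha, ht, map_mul, map_natCast]⟩

/-- Fontaine's map `θ_n : W(A/p) → A/p^{n+1}`. -/
noncomputable def theta (n : ℕ) : WittVector p (A ⧸ 𝕀) →+* A ⧸ (𝕀 ^ (n + 1)) :=
  (WittVector.map (rho p A n)).liftOfSurjective
    (WittVector.map_surjective _ (rho_surjective p A n))
    ⟨WittVector.ghostComponent n, fun y hy =>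
      RingHom.mem_ker.mpr (map_rho_ker p A n y (RingHom.mem_ker.mp hy))⟩

theorem theta_map (n : ℕ) (y : WittVector p (A ⧸ (𝕀 ^ (n + 1)))) :
    theta p A n (WittVector.map (rho p A n) y) = WittVector.ghostComponent n y :=
  RingHom.liftOfRightInverse_comp_apply _ _ _ _ y

variable [CharP (A ⧸ Ideal.span {(p : A)}) p]
variable {B : Type*} [CommRing B] [CharP B p] [PerfectRing B p]

/-- the `n`-th approximation `W(B) → A/p^{n+1}`. -/
noncomputable def gn (f : B →+* Perfection (A ⧸ 𝕀) p) (n : ℕ) :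
    WittVector p B →+* A ⧸ (𝕀 ^ (n + 1)) :=
  (theta p A n).comp (WittVector.map ((Perfection.coeff (A ⧸ 𝕀) p n).comp f))

theorem gn_eq (f : B →+* Perfection (A ⧸ 𝕀) p) (n : ℕ) (x : WittVector p B)
    (y : WittVector p (A ⧸ (𝕀 ^ (n + 1))))
    (h : ∀ i, rho p A n (y.coeff i) = Perfection.coeff (A ⧸ 𝕀) p n (f (x.coeff i))) :
    gn p A f n x = WittVector.ghostComponent n y := by
  have hmap : WittVector.map (rho p A n) y
      = WittVector.map ((Perfection.coeff (A ⧸ 𝕀) p n).comp f) x := by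
    apply WittVector.ext
    intro i
    rw [WittVector.map_coeff, WittVector.map_coeff, RingHom.comp_apply]
    exact h i
  rw [gn, RingHom.comp_apply, ← hmap, theta_map]

/-- reduction between the finite levels. -/
noncomputable def redTo (m n : ℕ) (h : m ≤ n) : (A ⧸ (𝕀 ^ (n + 1))) →+* A ⧸ (𝕀 ^ (m + 1)) :=
  Ideal.Quotient.factor (Ideal.pow_le_pow_right (Nat.succ_le_succ h))

theorem redTo_gn_succ (f : B →+* Perfection (A ⧸ 𝕀) p) (n : ℕ) (x : WittVector p B) :
    redTo p A n (n + 1) (Nat.le_succ n) (gn p A f (n + 1) x) = gn p A f n x := by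
  set y : WittVector p (A ⧸ (𝕀 ^ (n + 1 + 1))) :=
    WittVector.mk p fun i =>
      surjInv (rho_surjective p A (n + 1)) (Perfection.coeff (A ⧸ 𝕀) p (n + 1) (f (x.coeff i)))
    with hydef
  have hy : gn p A f (n + 1) x = WittVector.ghostComponent (n + 1) y := by
    refine gn_eq p A f (n + 1) x y fun i => ?_
    rw [hydef, WittVector.coeff_mk]
    exact rightInverse_surjInv _ _
  set y' : WittVector p (A ⧸ (𝕀 ^ (n + 1))) :=
    WittVector.mk p fun i => (redTo p A n (n + 1) (Nat.le_succ n) (y.coeff i)) ^ p with hy'def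
  have hrho : ∀ c : A ⧸ (𝕀 ^ (n + 1 + 1)),
      rho p A n (redTo p A n (n + 1) (Nat.le_succ n) c) = rho p A (n + 1) c := by
    intro c
    obtain ⟨a, rfl⟩ := Ideal.Quotient.mk_surjective c
    rw [redTo, Ideal.Quotient.factor_mk, rho, rho, Ideal.Quotient.factor_mk,
      Ideal.Quotient.factor_mk]
  have hy' : gn p A f n x = WittVector.ghostComponent n y' := by
    refine gn_eq p A f n x y' fun i => ?_
    rw [hy'def, WittVector.coeff_mk, map_pow, hrho, hydef, WittVector.coeff_mk,
      rightInverse_surjInv (rho_surjective p A (n + 1)), Perfection.coeff_pow_p']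
  rw [hy, hy']
  rw [WittVector.ghostComponent_apply, WittVector.ghostComponent_apply,
    aeval_wittPolynomial, aeval_wittPolynomial, map_sum]
  rw [Finset.sum_range_succ]
  have hlast : redTo p A n (n + 1) (Nat.le_succ n)
      ((p : A ⧸ (𝕀 ^ (n + 1 + 1))) ^ (n + 1) * y.coeff (n + 1) ^ p ^ (n + 1 - (n + 1))) = 0 := by
    rw [map_mul, map_pow, map_natCast, p_pow_zero p A n, zero_mul]
  rw [hlast, add_zero]
  refine Finset.sum_congr rfl fun i hi => ?_
  have hin : i ≤ n := Nat.lt_succ_iff.mp (Finset.mem_range.mp hi)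
  simp only [hy'def, WittVector.coeff_mk]
  rw [map_mul, map_pow, map_pow, map_natCast, ← pow_mul]
  congr 2
  rw [← pow_succ']
  congr 1
  omega

theorem redTo_gn (f : B →+* Perfection (A ⧸ 𝕀) p) {m n : ℕ} (h : m ≤ n)
    (x : WittVector p B) : redTo p A m n h (gn p A f n x) = gn p A f m x := by
  induction n, h using Nat.le_induction with
  | base =>
    obtain ⟨a, ha⟩ := Ideal.Quotient.mk_surjective (gn p A f m x)
    rw [← ha, redTo, Ideal.Quotient.factor_mk]
  | succ n hmn ih =>
    have hstep : redTo p A m (n + 1) (le_trans hmn (Nat.le_succ n)) (gn p A f (n + 1) x)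
        = redTo p A m n hmn (redTo p A n (n + 1) (Nat.le_succ n) (gn p A f (n + 1) x)) := by
      obtain ⟨a, ha⟩ := Ideal.Quotient.mk_surjective (gn p A f (n + 1) x)
      rw [← ha, redTo, redTo, redTo, Ideal.Quotient.factor_mk, Ideal.Quotient.factor_mk,
        Ideal.Quotient.factor_mk]
    rw [hstep, redTo_gn_succ, ih]


variable [IsAdicComplete (Ideal.span {(p : A)}) A]

theorem cast_helper {a b : A} {n : ℕ} (h : Ideal.Quotient.mk (𝕀 ^ (n + 1)) a
    = Ideal.Quotient.mk (𝕀 ^ (n + 1)) b) : a - b ∈ 𝕀 ^ (n + 1) :=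
  Ideal.Quotient.eq.mp h

theorem lift_exists (c : ℕ → A)
    (hc : ∀ n, Ideal.Quotient.mk (𝕀 ^ (n + 1)) (c n) =
      Ideal.Quotient.mk (𝕀 ^ (n + 1)) (c (n + 1))) :
    ∃ L : A, ∀ n, Ideal.Quotient.mk (𝕀 ^ (n + 1)) L = Ideal.Quotient.mk (𝕀 ^ (n + 1)) (c n) := by
  have hc2 : ∀ {m n : ℕ}, m ≤ n → Ideal.Quotient.mk (𝕀 ^ (m + 1)) (c m)
      = Ideal.Quotient.mk (𝕀 ^ (m + 1)) (c n) := by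
    intro m n h
    induction n, h using Nat.le_induction with
    | base => rfl
    | succ n hmn ih =>
      rw [ih]
      have h1 := cast_helper p A (hc n)
      have h2 : c n - c (n + 1) ∈ 𝕀 ^ (m + 1) :=
        Ideal.pow_le_pow_right (Nat.succ_le_succ hmn) h1
      exact Ideal.Quotient.eq.mpr h2
  have hcauchy : ∀ {m n : ℕ}, m ≤ n →
      c m ≡ c n [SMOD ((𝕀 : Ideal A) ^ m • (⊤ : Submodule A A))] := by
    intro m n h
    rw [SModEq.sub_mem, smul_eq_mul, Ideal.mul_top]
    exact Ideal.pow_le_pow_right (Nat.le_succ m) (cast_helper p A (hc2 h))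
  obtain ⟨L, hL⟩ := IsPrecomplete.prec (IsAdicComplete.toIsPrecomplete) @hcauchy
  refine ⟨L, fun n => ?_⟩
  have h1 := hL (n + 1)
  rw [SModEq.sub_mem, smul_eq_mul, Ideal.mul_top] at h1
  have h2 : L - c (n + 1) ∈ 𝕀 ^ (n + 1) := by
    have := neg_mem h1
    rwa [neg_sub] at this
  rw [Ideal.Quotient.eq.mpr h2, hc n]

theorem eq_zero_of_forall_mem {a : A} (h : ∀ n : ℕ, a ∈ 𝕀 ^ (n + 1)) : a = 0 :=
  IsHausdorff.haus (inferInstance : IsHausdorff (Ideal.span {(p : A)}) A) a fun n => by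
    rw [SModEq.sub_mem, sub_zero, smul_eq_mul, Ideal.mul_top]
    cases n with
    | zero => rw [pow_zero, Ideal.one_eq_top]; exact Submodule.mem_top
    | succ n => exact h n

section Complete

variable [IsAdicComplete (Ideal.span {(p : A)}) A]

theorem gn_lift_exists (f : B →+* Perfection (A ⧸ 𝕀) p) (x : WittVector p B) :
    ∃ L : A, ∀ n, Ideal.Quotient.mk (𝕀 ^ (n + 1)) L = gn p A f n x := by
  have hsurj : ∀ n : ℕ, ∃ a : A, Ideal.Quotient.mk (𝕀 ^ (n + 1)) a = gn p A f n x := fun n =>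
    Ideal.Quotient.mk_surjective _
  choose c hc using hsurj
  have hstep : ∀ n, Ideal.Quotient.mk (𝕀 ^ (n + 1)) (c n) =
      Ideal.Quotient.mk (𝕀 ^ (n + 1)) (c (n + 1)) := by
    intro n
    rw [hc n]
    have h1 : Ideal.Quotient.mk (𝕀 ^ (n + 1)) (c (n + 1))
        = redTo p A n (n + 1) (Nat.le_succ n) (Ideal.Quotient.mk (𝕀 ^ (n + 1 + 1)) (c (n + 1))) :=
      (Ideal.Quotient.factor_mk _ _).symm
    rw [h1, hc (n + 1), redTo_gn_succ]
  obtain ⟨L, hL⟩ := lift_exists p A c hstep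
  exact ⟨L, fun n => by rw [hL n, hc n]⟩

/-- The limit function `W(B) → A`. -/
noncomputable def Gfun (f : B →+* Perfection (A ⧸ 𝕀) p) (x : WittVector p B) : A :=
  (gn_lift_exists p A f x).choose

theorem Gfun_spec (f : B →+* Perfection (A ⧸ 𝕀) p) (x : WittVector p B) (n : ℕ) :
    Ideal.Quotient.mk (𝕀 ^ (n + 1)) (Gfun p A f x) = gn p A f n x :=
  (gn_lift_exists p A f x).choose_spec n

theorem mk_eq_all (a b : A)
    (h : ∀ n : ℕ, Ideal.Quotient.mk (𝕀 ^ (n + 1)) a = Ideal.Quotient.mk (𝕀 ^ (n + 1)) b) :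
    a = b :=
  sub_eq_zero.mp (eq_zero_of_forall_mem p A fun n => Ideal.Quotient.eq.mp (h n))

/-- The limit ring homomorphism `W(B) → A` attached to `f : B → A^♭`. -/
noncomputable def G (f : B →+* Perfection (A ⧸ 𝕀) p) : WittVector p B →+* A where
  toFun := Gfun p A f
  map_one' := mk_eq_all p A _ _ fun n => by simp only [Gfun_spec, map_one]
  map_mul' x y := mk_eq_all p A _ _ fun n => by simp only [map_mul, Gfun_spec]
  map_zero' := mk_eq_all p A _ _ fun n => by simp only [Gfun_spec, map_zero]
  map_add' x y := mk_eq_all p A _ _ fun n => by simp only [map_add, Gfun_spec]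

theorem constantCoeff_teichmuller' (r : B) :
    WittVector.constantCoeff (WittVector.teichmuller p r) = r :=
  WittVector.teichmuller_coeff_zero p r

/-- The ring homomorphism `B → A/p` attached to `g : W(B) → A`. -/
noncomputable def beta (g : WittVector p B →+* A) : B →+* A ⧸ 𝕀 where
  toFun b := Ideal.Quotient.mk 𝕀 (g (WittVector.teichmuller p b))
  map_one' := by
    show Ideal.Quotient.mk 𝕀 (g (WittVector.teichmuller p 1)) = 1
    rw [map_one (WittVector.teichmuller p), map_one, map_one]
  map_mul' a b := by
    show Ideal.Quotient.mk 𝕀 (g (WittVector.teichmuller p (a * b)))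
      = Ideal.Quotient.mk 𝕀 (g (WittVector.teichmuller p a))
        * Ideal.Quotient.mk 𝕀 (g (WittVector.teichmuller p b))
    rw [map_mul (WittVector.teichmuller p), map_mul, map_mul]
  map_zero' := by
    show Ideal.Quotient.mk 𝕀 (g (WittVector.teichmuller p 0)) = 0
    rw [WittVector.teichmuller_zero, map_zero, map_zero]
  map_add' a b := by
    show Ideal.Quotient.mk 𝕀 (g (WittVector.teichmuller p (a + b)))
      = Ideal.Quotient.mk 𝕀 (g (WittVector.teichmuller p a))
        + Ideal.Quotient.mk 𝕀 (g (WittVector.teichmuller p b))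
    have h0 : ((WittVector.teichmuller p (a + b) : WittVector p B)
        - WittVector.teichmuller p a - WittVector.teichmuller p b).coeff 0 = 0 := by
      show WittVector.constantCoeff ((WittVector.teichmuller p (a + b) : WittVector p B)
        - WittVector.teichmuller p a - WittVector.teichmuller p b) = 0
      rw [map_sub, map_sub, constantCoeff_teichmuller', constantCoeff_teichmuller',
        constantCoeff_teichmuller']
      ring
    obtain ⟨y, hy⟩ := exists_pmul p _ h0
    have key : g (WittVector.teichmuller p (a + b)) - g (WittVector.teichmuller p a)
        - g (WittVector.teichmuller p b) = (p : A) * g y := by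
      rw [← map_sub, ← map_sub, hy, map_mul, map_natCast]
    have hmem : g (WittVector.teichmuller p (a + b)) - g (WittVector.teichmuller p a)
        - g (WittVector.teichmuller p b) ∈ 𝕀 := by
      rw [key]
      exact Ideal.mul_mem_right _ _ (Ideal.mem_span_singleton_self _)
    have h2 := Ideal.Quotient.eq_zero_iff_mem.mpr hmem
    rw [map_sub, map_sub, sub_sub, sub_eq_zero] at h2
    exact h2

theorem beta_inj (g g' : WittVector p B →+* A) (h : beta p A g = beta p A g') : g = g' := by
  have hb : ∀ b : B, Ideal.Quotient.mk 𝕀 (g (WittVector.teichmuller p b))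
      = Ideal.Quotient.mk 𝕀 (g' (WittVector.teichmuller p b)) := fun b =>
    RingHom.congr_fun h b
  have key : ∀ (n : ℕ) (b : B),
      g (WittVector.teichmuller p b) - g' (WittVector.teichmuller p b) ∈ 𝕀 ^ (n + 1) := by
    intro n b
    set c := ((frobeniusEquiv B p).symm)^[n] b with hc
    have hdvd : (p : A) ∣ g (WittVector.teichmuller p c) - g' (WittVector.teichmuller p c) :=
      Ideal.mem_span_singleton.mp (Ideal.Quotient.eq.mp (hb c))
    have h2 := dvd_sub_pow_of_dvd_sub hdvd n
    have h3 : ∀ g'' : WittVector p B →+* A,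
        g'' (WittVector.teichmuller p c) ^ p ^ n = g'' (WittVector.teichmuller p b) := by
      intro g''
      rw [← map_pow g'', ← map_pow (WittVector.teichmuller p) c (p ^ n), hc,
        iterate_frobeniusEquiv_symm_pow p b n]
    rw [Ideal.span_singleton_pow, Ideal.mem_span_singleton]
    rw [h3 g, h3 g'] at h2
    exact_mod_cast h2
  have main : ∀ (n : ℕ) (x : WittVector p B), g x - g' x ∈ 𝕀 ^ n := by
    intro n
    induction n with
    | zero =>
      intro x
      rw [pow_zero, Ideal.one_eq_top]
      exact Submodule.mem_top
    | succ n ih =>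
      intro x
      have h0 : ((x - WittVector.teichmuller p (x.coeff 0)) : WittVector p B).coeff 0 = 0 := by
        show WittVector.constantCoeff (x - WittVector.teichmuller p (x.coeff 0)) = 0
        rw [map_sub, constantCoeff_teichmuller']
        show x.coeff 0 - x.coeff 0 = 0
        ring
      obtain ⟨y, hy⟩ := exists_pmul p _ h0
      have hx : x = WittVector.teichmuller p (x.coeff 0) + (p : WittVector p B) * y := by
        rw [← hy]; ring
      have hgy : g x - g (WittVector.teichmuller p (x.coeff 0)) = (p : A) * g y := by
        rw [← map_sub, hy, map_mul, map_natCast]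
      have hgy' : g' x - g' (WittVector.teichmuller p (x.coeff 0)) = (p : A) * g' y := by
        rw [← map_sub, hy, map_mul, map_natCast]
      have hsum : g x - g' x = (g (WittVector.teichmuller p (x.coeff 0))
          - g' (WittVector.teichmuller p (x.coeff 0))) + (p : A) * (g y - g' y) := by
        rw [mul_sub, ← hgy, ← hgy']
        ring
      rw [hsum]
      refine add_mem (key n _) ?_
      have hmul : (p : A) * (g y - g' y) ∈ 𝕀 * 𝕀 ^ n :=
        Ideal.mul_mem_mul (Ideal.mem_span_singleton_self _) (ih y)
      rwa [← pow_succ'] at hmul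
  refine RingHom.ext fun x => sub_eq_zero.mp (eq_zero_of_forall_mem p A fun n => main (n + 1) x)

theorem beta_G (f : B →+* Perfection (A ⧸ 𝕀) p) (b : B) :
    beta p A (G p A f) b = Perfection.coeff (A ⧸ 𝕀) p 0 (f b) := by
  show Ideal.Quotient.mk 𝕀 (Gfun p A f (WittVector.teichmuller p b))
      = Perfection.coeff (A ⧸ 𝕀) p 0 (f b)
  have h1 : Ideal.Quotient.mk 𝕀 (Gfun p A f (WittVector.teichmuller p b))
      = rho p A 0 (Ideal.Quotient.mk (𝕀 ^ (0 + 1)) (Gfun p A f (WittVector.teichmuller p b))) :=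
    (Ideal.Quotient.factor_mk _ _).symm
  rw [h1, Gfun_spec]
  set c := surjInv (rho_surjective p A 0) (Perfection.coeff (A ⧸ 𝕀) p 0 (f b)) with hcdef
  have h2 : gn p A f 0 (WittVector.teichmuller p b)
      = WittVector.ghostComponent 0 (WittVector.teichmuller p c) := by
    refine gn_eq p A f 0 _ _ fun i => ?_
    cases i with
    | zero =>
      rw [WittVector.teichmuller_coeff_zero, WittVector.teichmuller_coeff_zero, hcdef]
      exact rightInverse_surjInv _ _
    | succ i =>
      rw [WittVector.teichmuller_coeff_pos p c (i + 1) (Nat.succ_pos i),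
        WittVector.teichmuller_coeff_pos p b (i + 1) (Nat.succ_pos i), map_zero, map_zero,
        map_zero]
  have h3 : WittVector.ghostComponent 0 (WittVector.teichmuller p c) = c := by
    rw [WittVector.ghostComponent_teichmuller]
    simp
  rw [h2, h3, hcdef]
  exact rightInverse_surjInv _ _

end Complete

end ASide

end UWV16

/-- Universal property of Witt vectors / tilting: for a perfect `𝔽_p`-algebra `B` and
a `p`-adically separated and complete ring `A`, ring homomorphisms `W(B) → A`
correspond bijectively to ring homomorphisms `B → A^♭ = lim_{x↦x^p} A/p`; concretely,
the homomorphism `f : B → A^♭` corresponding to `g : W(B) → A` has `n`-th component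
`f(b)_n = g([b^{p^{-n}}]) mod p`, where `[·]` is the Teichmüller lift (this is
equivalent to the formula `g((x_n)) = Σ p^n θ_A(f_n(x_n))`). -/
theorem stmt_16 (p : ℕ) [Fact p.Prime]
    (B : Type*) [CommRing B] [CharP B p] [ExpChar B p] [PerfectRing B p]
    (A : Type*) [CommRing A] [IsAdicComplete (Ideal.span {(p : A)}) A]
    [CharP (A ⧸ Ideal.span {(p : A)}) p] :
    ∃ E : (WittVector p B →+* A) ≃
        (B →+* Perfection (A ⧸ Ideal.span {(p : A)}) p),
      ∀ (g : WittVector p B →+* A) (b : B) (n : ℕ),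
        Perfection.coeff (A ⧸ Ideal.span {(p : A)}) p n (E g b) =
          Ideal.Quotient.mk (Ideal.span {(p : A)})
            (g (WittVector.teichmuller p (((frobeniusEquiv B p).symm)^[n] b))) := by
  classical
  refine ⟨Equiv.ofBijective
    (fun g => Perfection.lift p B (A ⧸ Ideal.span {(p : A)}) (UWV16.beta p A g))
    ⟨fun g g' h => UWV16.beta_inj p A g g'
      ((Perfection.lift p B (A ⧸ Ideal.span {(p : A)})).injective h),
     fun f => ⟨UWV16.G p A f, ?_⟩⟩, ?_⟩
  · have hβ : UWV16.beta p A (UWV16.G p A f)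
        = (Perfection.lift p B (A ⧸ Ideal.span {(p : A)})).symm f := by
      refine RingHom.ext fun b => ?_
      rw [UWV16.beta_G p A f b]
      rfl
    show Perfection.lift p B (A ⧸ Ideal.span {(p : A)}) (UWV16.beta p A (UWV16.G p A f)) = f
    rw [hβ, Equiv.apply_symm_apply]
  · intro g b n
    rfl
end
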